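/- Let X = {0,…,k} and μ ∈ P(X) with supp(μ) = X, and let c be a Lipschitz cost with pressure functional P. Consider F : ℝ^k → ℝ defined by F(v) = −∫_X φ_v dμ + P(c + φ_v), where φ_v(0) = 0 and φ_v(j) = v_j. Then there exist ε > 0 and ξ ∈ ℝ such that F(tv) ≥ tε + ξ for all v in the unit sphere S^{k−1} and all t > 0; consequently F attains a minimum on ℝ^k. -/

import Mathlib

open MeasureTheory Filter Topology

attribute [local instance] PiNat.dist

/-- The Bernoulli space `{1,...,d}^ℕ`, with the metric `dist z y = (1/2)^n` where `n`
is the first coordinate at which `z` and `y` differ (provided by `PiNat.dist`). -/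
abbrev W (d : ℕ) : Type := ℕ → Fin d

/-- The shift map `σ` on the Bernoulli space. -/
def shift {d : ℕ} (y : W d) : W d := fun n => y (n + 1)

/-- Prepend the symbol `a` to the sequence `y`, i.e. the point `a y` (a preimage of `y`
under the shift). -/
def cons {d : ℕ} (a : Fin d) (y : W d) : W d := fun n =>
  match n with
  | 0 => a
  | Nat.succ k => y k

variable {X : Type*} [Fintype X] [MeasurableSpace X] [TopologicalSpace X] {d : ℕ}

/-- `π ∈ Π(·,σ)`: a Borel probability on `X × Ω` whose `y`-marginal is `σ`-invariant. -/
def IsPlan (π : Measure (X × W d)) : Prop :=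
  IsProbabilityMeasure π ∧
    ∀ g : W d → ℝ, Continuous g → ∫ p, g (shift p.2) ∂π = ∫ p, g p.2 ∂π

/-- A cost `c` is normalized if `∑_{x ∈ X} ∑_{σ w = y} e^{c(x,w)} = 1` for every `y`. -/
def IsNormalized (c : X × W d → ℝ) : Prop :=
  ∀ y : W d, ∑ x : X, ∑ a : Fin d, Real.exp (c (x, cons a y)) = 1

/-- `π` is a fixed point of the dual transfer operator `L̂_c^*`, i.e. a Gibbs plan for `c`. -/
def GibbsFixed (c : X × W d → ℝ) (π : Measure (X × W d)) : Prop :=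
  ∀ u : X × W d → ℝ, Continuous u →
    ∫ p, u p ∂π =
      ∫ p, ∑ x : X, ∑ a : Fin d,
        Real.exp (c (x, cons a p.2)) * u (x, cons a p.2) ∂π

/-- `c` is a Lipschitz cost: Lipschitz in the `Ω` variable, uniformly in `x ∈ X`. -/
def LipCost (c : X × W d → ℝ) : Prop :=
  ∃ K : ℝ, ∀ (x : X) (y z : W d), |c (x, y) - c (x, z)| ≤ K * dist y z

/-- The entropy of a plan: `H(π) = inf { -∫ b dπ : b normalized }`. -/
noncomputable def Hent (π : Measure (X × W d)) : ℝ :=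
  sInf {r | ∃ b : X × W d → ℝ, LipCost b ∧ IsNormalized b ∧ r = -∫ p, b p ∂π}

/-- The pressure `P(c) = sup_{π ∈ Π(·,σ)} ∫ c dπ + H(π)`. -/
noncomputable def Pr (c : X × W d → ℝ) : ℝ :=
  sSup {r | ∃ π : Measure (X × W d), IsPlan π ∧ r = ∫ p, c p ∂π + Hent π}

/-- For `v ∈ ℝ^k`, the function `φ_v : {0,…,k} → ℝ` with `φ_v(0) = 0`, `φ_v(j) = v_j`. -/
def phiV {k : ℕ} (v : Fin k → ℝ) : Fin (k + 1) → ℝ := Fin.cases 0 v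

section Aux

variable {k d : ℕ}

lemma cons_shift (w : W d) : cons (w 0) (shift w) = w := by
  funext n; cases n <;> rfl

lemma lipcost_continuous (b : Fin (k + 1) × W d → ℝ) (hb : LipCost b) : Continuous b := by
  obtain ⟨K, hK⟩ := hb
  rw [continuous_iff_continuousAt]
  rintro ⟨x, y⟩
  rw [ContinuousAt, Metric.tendsto_nhds]
  intro ε hε
  set K' : ℝ := max K 1 with hK'def
  have hK'0 : (0 : ℝ) < K' := lt_of_lt_of_le one_pos (le_max_right _ _)
  obtain ⟨n, hn⟩ : ∃ n : ℕ, (1 / 2 : ℝ) ^ n < ε / K' :=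
    exists_pow_lt_of_lt_one (by positivity) (by norm_num)
  have hU : IsOpen (({x} : Set (Fin (k + 1))) ×ˢ PiNat.cylinder y n) :=
    (isOpen_discrete _).prod (PiNat.isOpen_cylinder _ y n)
  refine Filter.eventually_of_mem
    (hU.mem_nhds ⟨rfl, PiNat.self_mem_cylinder y n⟩) ?_
  rintro ⟨x', y'⟩ ⟨hx', hy'⟩
  simp only [Set.mem_singleton_iff] at hx'
  rw [hx']
  have h1 : dist y' y ≤ (1 / 2 : ℝ) ^ n := PiNat.mem_cylinder_iff_dist_le.1 hy'
  have h2 : |b (x, y') - b (x, y)| ≤ K * dist y' y := hK x y' y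
  have h0 : (0 : ℝ) ≤ dist y' y := PiNat.dist_nonneg y' y
  have hKK' : K ≤ K' := le_max_left _ _
  rw [Real.dist_eq]
  calc |b (x, y') - b (x, y)| ≤ K * dist y' y := h2
    _ ≤ K' * dist y' y := mul_le_mul_of_nonneg_right hKK' h0
    _ ≤ K' * ((1 / 2 : ℝ) ^ n) := mul_le_mul_of_nonneg_left h1 hK'0.le
    _ < K' * (ε / K') := by exact mul_lt_mul_of_pos_left hn hK'0
    _ = ε := by field_simp

lemma cont_integrable (f : Fin (k + 1) × W d → ℝ) (hf : Continuous f)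
    (π : MeasureTheory.Measure (Fin (k + 1) × W d)) [MeasureTheory.IsFiniteMeasure π] :
    MeasureTheory.Integrable f π := by
  rw [← MeasureTheory.integrableOn_univ]
  exact hf.continuousOn.integrableOn_compact' isCompact_univ MeasurableSet.univ

lemma isPlan_dirac (hd : 0 < d) (x₀ : Fin (k + 1)) :
    IsPlan (MeasureTheory.Measure.dirac (x₀, (fun _ => (⟨0, hd⟩ : Fin d)) )) := by
  refine ⟨inferInstance, fun g hg => ?_⟩
  rw [MeasureTheory.integral_dirac, MeasureTheory.integral_dirac]
  rfl

lemma hent_mem_nonneg (π : MeasureTheory.Measure (Fin (k + 1) × W d)) (r : ℝ)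
    (hr : r ∈ {r | ∃ b : Fin (k + 1) × W d → ℝ,
      LipCost b ∧ IsNormalized b ∧ r = -∫ p, b p ∂π}) : 0 ≤ r := by
  obtain ⟨b, _, hbn, rfl⟩ := hr
  have hb : ∀ p : Fin (k + 1) × W d, b p ≤ 0 := by
    rintro ⟨x, w⟩
    have h := hbn (shift w)
    have h1 : Real.exp (b (x, cons (w 0) (shift w))) ≤
        ∑ a : Fin d, Real.exp (b (x, cons a (shift w))) :=
      Finset.single_le_sum (f := fun a : Fin d => Real.exp (b (x, cons a (shift w))))
        (fun a _ => (Real.exp_pos _).le) (Finset.mem_univ (w 0))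
    have h2 : ∑ a : Fin d, Real.exp (b (x, cons a (shift w))) ≤
        ∑ x' : Fin (k + 1), ∑ a : Fin d, Real.exp (b (x', cons a (shift w))) :=
      Finset.single_le_sum
        (f := fun x' : Fin (k + 1) => ∑ a : Fin d, Real.exp (b (x', cons a (shift w))))
        (fun x' _ => Finset.sum_nonneg fun a _ => (Real.exp_pos _).le)
        (Finset.mem_univ x)
    have : Real.exp (b (x, w)) ≤ 1 := by
      rw [← cons_shift w] ; rw [h] at h2; exact h1.trans h2
    exact Real.exp_le_one_iff.1 this
  have := MeasureTheory.integral_nonpos (μ := π) (f := b) hb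
  linarith

lemma bconst_lip : LipCost (fun _ : Fin (k + 1) × W d => -Real.log ((k + 1) * d)) :=
  ⟨0, fun x y z => by simp [PiNat.dist_nonneg y z]⟩

lemma bconst_normalized (hd : 0 < d) :
    IsNormalized (fun _ : Fin (k + 1) × W d => -Real.log ((k + 1) * d)) := by
  intro y
  have hpos : (0 : ℝ) < (k + 1) * d := by positivity
  simp only [Finset.sum_const, Finset.card_univ, Fintype.card_fin, nsmul_eq_mul,
    Real.exp_neg, Real.exp_log hpos]
  field_simp
  exact Nat.cast_succ k

lemma hent_bounds (hd : 0 < d) (π : MeasureTheory.Measure (Fin (k + 1) × W d))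
    [MeasureTheory.IsProbabilityMeasure π] :
    0 ≤ Hent π ∧ Hent π ≤ Real.log ((k + 1) * d) := by
  have hmem : Real.log ((k + 1) * d) ∈ {r | ∃ b : Fin (k + 1) × W d → ℝ,
      LipCost b ∧ IsNormalized b ∧ r = -∫ p, b p ∂π} := by
    refine ⟨_, bconst_lip, bconst_normalized hd, ?_⟩
    rw [MeasureTheory.integral_const]
    simp
  constructor
  · exact le_csInf ⟨_, hmem⟩ (hent_mem_nonneg π)
  · exact csInf_le ⟨0, fun r hr => hent_mem_nonneg π r hr⟩ hmem

lemma pr_nonempty (hd : 0 < d) (c : Fin (k + 1) × W d → ℝ) :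
    ∃ r, r ∈ {r | ∃ π : MeasureTheory.Measure (Fin (k + 1) × W d),
      IsPlan π ∧ r = ∫ p, c p ∂π + Hent π} :=
  ⟨_, _, isPlan_dirac hd 0, rfl⟩

lemma pr_bddAbove (hd : 0 < d) (c : Fin (k + 1) × W d → ℝ) (hcont : Continuous c) :
    BddAbove {r | ∃ π : MeasureTheory.Measure (Fin (k + 1) × W d),
      IsPlan π ∧ r = ∫ p, c p ∂π + Hent π} := by
  haveI : Nonempty (Fin d) := ⟨⟨0, hd⟩⟩
  obtain ⟨p₀, -, hp₀⟩ := isCompact_univ.exists_isMaxOn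
    (Set.univ_nonempty (α := Fin (k + 1) × W d)) hcont.continuousOn
  refine ⟨c p₀ + Real.log ((k + 1) * d), ?_⟩
  rintro r ⟨π, ⟨hπ1, _⟩, rfl⟩
  haveI := hπ1
  have h1 : ∫ p, c p ∂π ≤ c p₀ := by
    calc ∫ p, c p ∂π ≤ ∫ _p, c p₀ ∂π :=
          MeasureTheory.integral_mono (cont_integrable c hcont π)
            (MeasureTheory.integrable_const _) (fun q => hp₀ (Set.mem_univ q))
      _ = c p₀ := by rw [MeasureTheory.integral_const]; simp
  have h2 := (hent_bounds hd π).2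
  linarith

lemma pr_ge (hd : 0 < d) (c : Fin (k + 1) × W d → ℝ) (hcont : Continuous c)
    (x₀ : Fin (k + 1)) :
    c (x₀, (fun _ => (⟨0, hd⟩ : Fin d))) ≤ Pr c := by
  set π := MeasureTheory.Measure.dirac (α := Fin (k + 1) × W d)
    (x₀, (fun _ => (⟨0, hd⟩ : Fin d))) with hπdef
  have hplan := isPlan_dirac hd x₀
  have hmem : ∫ p, c p ∂π + Hent π ∈ {r | ∃ π : MeasureTheory.Measure (Fin (k + 1) × W d),
      IsPlan π ∧ r = ∫ p, c p ∂π + Hent π} := ⟨π, hplan, rfl⟩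
  have hle := le_csSup (pr_bddAbove hd c hcont) hmem
  haveI : MeasureTheory.IsProbabilityMeasure π := hplan.1
  have h0 := (hent_bounds hd π).1
  have hi : ∫ p, c p ∂π = c (x₀, (fun _ => (⟨0, hd⟩ : Fin d))) :=
    MeasureTheory.integral_dirac c _
  rw [Pr]
  rw [hi] at hle
  linarith

lemma pr_le_add (hd : 0 < d) (c₁ c₂ : Fin (k + 1) × W d → ℝ)
    (h1 : Continuous c₁) (h2 : Continuous c₂) (M : ℝ)
    (hM : ∀ p, c₁ p ≤ c₂ p + M) : Pr c₁ ≤ Pr c₂ + M := by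
  rw [Pr]
  refine csSup_le ⟨_, _, isPlan_dirac hd 0, rfl⟩ ?_
  rintro r ⟨π, hπ, rfl⟩
  haveI := hπ.1
  have hint : ∫ p, c₁ p ∂π ≤ ∫ p, c₂ p ∂π + M := by
    have h := MeasureTheory.integral_mono (f := fun p => c₁ p) (g := fun p => c₂ p + M)
      (cont_integrable c₁ h1 π)
      ((cont_integrable c₂ h2 π).add (MeasureTheory.integrable_const M)) hM
    rwa [MeasureTheory.integral_add (cont_integrable c₂ h2 π)
      (MeasureTheory.integrable_const M), MeasureTheory.integral_const,
      MeasureTheory.probReal_univ, one_smul] at h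
  have hle : ∫ p, c₂ p ∂π + Hent π ≤ Pr c₂ :=
    le_csSup (pr_bddAbove hd c₂ h2) ⟨π, hπ, rfl⟩
  linarith

lemma phiV_zero (v : Fin k → ℝ) : phiV v 0 = 0 := rfl

lemma phiV_succ (v : Fin k → ℝ) (i : Fin k) : phiV v i.succ = v i := by
  simp [phiV]

lemma phiV_smul (t : ℝ) (v : Fin k → ℝ) : phiV (t • v) = t • phiV v := by
  funext x
  refine Fin.cases ?_ (fun i => ?_) x
  · simp [phiV]
  · simp [phiV]

lemma phiV_abs_sub (u v : Fin k → ℝ) (x : Fin (k + 1)) :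
    |phiV u x - phiV v x| ≤ ‖u - v‖ := by
  refine Fin.cases ?_ (fun i => ?_) x
  · simp [phiV]
  · simp only [phiV, Fin.cases_succ]
    calc |u i - v i| = ‖(u - v) i‖ := by simp [Real.norm_eq_abs]
      _ ≤ ‖u - v‖ := norm_le_pi_norm _ i

lemma lipschitz_continuous_of_bound' (C : ℝ) (hC : 0 ≤ C) (g : (Fin k → ℝ) → ℝ)
    (h : ∀ u v, g u ≤ g v + C * ‖u - v‖) : Continuous g := by
  have hlg : LipschitzWith (Real.toNNReal C) g := by
    refine LipschitzWith.of_dist_le_mul fun u v => ?_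
    rw [Real.dist_eq, dist_eq_norm, Real.coe_toNNReal C hC, abs_sub_le_iff]
    refine ⟨by linarith [h u v], ?_⟩
    have h2 := h v u
    rw [norm_sub_rev] at h2
    linarith
  exact hlg.continuous

end Aux


/-- The function `F(v) = −∫ φ_v dμ + P(c + φ_v)` grows at least linearly along rays:
there are `ε > 0` and `ξ ∈ ℝ` with `F(tv) ≥ tε + ξ` for all unit vectors `v` and `t > 0`;
consequently `F` attains a minimum on `ℝ^k`. -/
theorem F_coercive_and_attains_min
    {k : ℕ} {d : ℕ} (hd : 0 < d)
    (c : Fin (k + 1) × W d → ℝ) (hc : LipCost c)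
    (μ : Measure (Fin (k + 1))) (hμ : IsProbabilityMeasure μ)
    (hfull : ∀ x : Fin (k + 1), 0 < μ {x}) :
    (∃ ε > (0 : ℝ), ∃ ξ : ℝ, ∀ v : Fin k → ℝ, ‖v‖ = 1 → ∀ t : ℝ, 0 < t →
        t * ε + ξ ≤
          -∫ x, phiV (t • v) x ∂μ + Pr (fun p => c p + phiV (t • v) p.1)) ∧
      ∃ v₀ : Fin k → ℝ, ∀ v : Fin k → ℝ,
        -∫ x, phiV v₀ x ∂μ + Pr (fun p => c p + phiV v₀ p.1) ≤
          -∫ x, phiV v x ∂μ + Pr (fun p => c p + phiV v p.1) := by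
  classical
  set w₀ : W d := fun _ => (⟨0, hd⟩ : Fin d) with hw₀
  have hlip : ∀ v : Fin k → ℝ, LipCost (fun p : Fin (k + 1) × W d => c p + phiV v p.1) := by
    intro v
    obtain ⟨K, hK⟩ := hc
    exact ⟨K, fun x y z => by simpa using hK x y z⟩
  have hcont' : ∀ v : Fin k → ℝ,
      Continuous (fun p : Fin (k + 1) × W d => c p + phiV v p.1) :=
    fun v => lipcost_continuous _ (hlip v)
  rcases Nat.eq_zero_or_pos k with hk | hk
  · subst hk
    constructor
    · refine ⟨1, one_pos, 0, fun v hv t ht => ?_⟩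
      rw [Subsingleton.elim v 0, norm_zero] at hv
      exact absurd hv zero_ne_one
    · refine ⟨0, fun v => ?_⟩
      have hv0 : v = 0 := Subsingleton.elim v 0
      rw [hv0]
  · haveI hnef : Nonempty (Fin k) := ⟨⟨0, hk⟩⟩
    set ξ : ℝ := Finset.univ.inf' Finset.univ_nonempty (fun x : Fin (k + 1) => c (x, w₀))
      with hξ
    -- Lipschitz bound for the integral term
    have hIμ : ∀ u v : Fin k → ℝ,
        ∫ x, phiV u x ∂μ ≤ (∫ x, phiV v x ∂μ) + ‖u - v‖ := by
      intro u v
      have hpt : ∀ x, phiV u x ≤ phiV v x + ‖u - v‖ := by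
        intro x
        have h := (abs_sub_le_iff.1 (phiV_abs_sub u v x)).1
        linarith
      have h := integral_mono (μ := μ) (f := fun x => phiV u x)
        (g := fun x => phiV v x + ‖u - v‖) Integrable.of_finite Integrable.of_finite hpt
      rwa [integral_add Integrable.of_finite (integrable_const _), integral_const,
        probReal_univ, one_smul] at h
    -- Lipschitz bound for the pressure term
    have hPr : ∀ u v : Fin k → ℝ,
        Pr (fun p : Fin (k + 1) × W d => c p + phiV u p.1) ≤
          Pr (fun p : Fin (k + 1) × W d => c p + phiV v p.1) + ‖u - v‖ := by
      intro u v
      refine pr_le_add hd _ _ (hcont' u) (hcont' v) _ fun p => ?_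
      have h := (abs_sub_le_iff.1 (phiV_abs_sub u v p.1)).1
      linarith
    -- the max function
    set Gm : (Fin k → ℝ) → ℝ :=
      fun v => Finset.univ.sup' Finset.univ_nonempty (phiV v) with hGm
    have hGmb : ∀ u v : Fin k → ℝ, Gm u ≤ Gm v + ‖u - v‖ := by
      intro u v
      refine Finset.sup'_le _ _ fun x _ => ?_
      have h := (abs_sub_le_iff.1 (phiV_abs_sub u v x)).1
      have h2 : phiV v x ≤ Gm v := Finset.le_sup' _ (Finset.mem_univ x)
      linarith
    set G : (Fin k → ℝ) → ℝ := fun v => Gm v - ∫ x, phiV v x ∂μ with hG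
    have hGcont : Continuous G := by
      refine lipschitz_continuous_of_bound' 2 (by norm_num) G fun u v => ?_
      have h1 := hGmb u v
      have h2 := hIμ v u
      rw [norm_sub_rev] at h2
      simp only [hG]
      linarith
    -- G is positive on the unit sphere
    have hsum1 : ∑ x : Fin (k + 1), (μ {x}).toReal = 1 := by
      have h := integral_fintype (μ := μ) (f := fun _ : Fin (k + 1) => (1 : ℝ))
        Integrable.of_finite
      exact (by simp : ∑ x : Fin (k + 1), μ.real {x} = 1)
    have hGpos : ∀ v : Fin k → ℝ, ‖v‖ = 1 → 0 < G v := by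
      intro v hv
      have hv0 : v ≠ 0 := by
        intro h
        rw [h] at hv
        simp at hv
      have hle : ∀ x, phiV v x ≤ Gm v := fun x => Finset.le_sup' _ (Finset.mem_univ x)
      obtain ⟨x₁, hx₁⟩ : ∃ x, phiV v x < Gm v := by
        by_contra h
        push_neg at h
        have hall : ∀ x, phiV v x = Gm v := fun x => le_antisymm (hle x) (h x)
        have h0 : Gm v = 0 := (hall 0).symm
        apply hv0
        funext i
        have hi := hall i.succ
        rw [phiV_succ, h0] at hi
        exact hi
      have hint : ∫ x, phiV v x ∂μ < Gm v := by
        rw [integral_fintype Integrable.of_finite]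
        simp only [smul_eq_mul]
        calc ∑ x : Fin (k + 1), (μ {x}).toReal * phiV v x
            < ∑ x : Fin (k + 1), (μ {x}).toReal * Gm v := by
              refine Finset.sum_lt_sum (fun x _ => ?_) ⟨x₁, Finset.mem_univ x₁, ?_⟩
              · exact mul_le_mul_of_nonneg_left (hle x) ENNReal.toReal_nonneg
              · have hpos : 0 < (μ {x₁}).toReal :=
                  ENNReal.toReal_pos (hfull x₁).ne' (measure_ne_top μ _)
                exact mul_lt_mul_of_pos_left hx₁ hpos
          _ = Gm v := by rw [← Finset.sum_mul, hsum1, one_mul]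
      simp only [hG]
      linarith
    -- minimum of G on the sphere
    have hsph : IsCompact (Metric.sphere (0 : Fin k → ℝ) 1) := isCompact_sphere 0 1
    have hsne : (Metric.sphere (0 : Fin k → ℝ) 1).Nonempty :=
      NormedSpace.sphere_nonempty.2 zero_le_one
    obtain ⟨vm, hvm, hvmin⟩ := hsph.exists_isMinOn hsne hGcont.continuousOn
    set ε : ℝ := G vm with hε
    have hεpos : 0 < ε := hGpos vm (mem_sphere_zero_iff_norm.1 hvm)
    -- key coercivity estimate
    have key : ∀ v : Fin k → ℝ, ‖v‖ = 1 → ∀ t : ℝ, 0 < t →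
        t * ε + ξ ≤
          -∫ x, phiV (t • v) x ∂μ + Pr (fun p : Fin (k + 1) × W d =>
            c p + phiV (t • v) p.1) := by
      intro v hv t ht
      obtain ⟨xm, -, hxm⟩ := Finset.exists_mem_eq_sup' (Finset.univ_nonempty
        (α := Fin (k + 1))) (phiV v)
      have h1 : c (xm, w₀) + phiV (t • v) xm ≤
          Pr (fun p : Fin (k + 1) × W d => c p + phiV (t • v) p.1) :=
        pr_ge hd _ (hcont' (t • v)) xm
      have h2 : ∫ x, phiV (t • v) x ∂μ = t * ∫ x, phiV v x ∂μ := by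
        rw [phiV_smul]
        simp only [Pi.smul_apply, smul_eq_mul]
        exact integral_const_mul t _
      have h3 : phiV (t • v) xm = t * phiV v xm := by
        rw [phiV_smul]
        simp
      have h4 : ξ ≤ c (xm, w₀) := Finset.inf'_le _ (Finset.mem_univ xm)
      have h5 : ε ≤ G v := hvmin (mem_sphere_zero_iff_norm.2 hv)
      have h6 : G v = phiV v xm - ∫ x, phiV v x ∂μ := by
        simp only [hG, hGm]
        rw [← hxm]
      have h7 : t * ε ≤ t * phiV v xm - t * ∫ x, phiV v x ∂μ := by
        have h8 : ε ≤ phiV v xm - ∫ x, phiV v x ∂μ := h6 ▸ h5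
        calc t * ε ≤ t * (phiV v xm - ∫ x, phiV v x ∂μ) :=
              mul_le_mul_of_nonneg_left h8 ht.le
          _ = t * phiV v xm - t * ∫ x, phiV v x ∂μ := mul_sub t _ _
      rw [h2]
      rw [h3] at h1
      linarith
    refine ⟨⟨ε, hεpos, ξ, key⟩, ?_⟩
    -- existence of a minimizer
    set F : (Fin k → ℝ) → ℝ := fun v =>
      -∫ x, phiV v x ∂μ + Pr (fun p : Fin (k + 1) × W d => c p + phiV v p.1) with hF
    have hFcont : Continuous F := by
      refine lipschitz_continuous_of_bound' 2 (by norm_num) F fun u v => ?_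
      have h1 := hPr u v
      have h2 := hIμ v u
      rw [norm_sub_rev] at h2
      simp only [hF]
      linarith
    set R : ℝ := max ((F 0 - ξ) / ε + 1) 1 with hR
    have hR1 : (1 : ℝ) ≤ R := le_max_right _ _
    have hball : IsCompact (Metric.closedBall (0 : Fin k → ℝ) R) := isCompact_closedBall 0 R
    have hbne : (Metric.closedBall (0 : Fin k → ℝ) R).Nonempty :=
      ⟨0, Metric.mem_closedBall_self (by linarith)⟩
    obtain ⟨v₀, hv₀mem, hv₀⟩ := hball.exists_isMinOn hbne hFcont.continuousOn
    refine ⟨v₀, fun v => ?_⟩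
    by_cases hvR : ‖v‖ ≤ R
    · exact hv₀ (mem_closedBall_zero_iff.2 hvR)
    · push_neg at hvR
      have htpos : (0 : ℝ) < ‖v‖ := by linarith
      have hv0 : v ≠ 0 := by
        intro h
        rw [h, norm_zero] at htpos
        exact lt_irrefl _ htpos
      set u : Fin k → ℝ := ‖v‖⁻¹ • v with hu
      have hun : ‖u‖ = 1 := by
        rw [hu, norm_smul, norm_inv, norm_norm, inv_mul_cancel₀ htpos.ne']
      have hvu : ‖v‖ • u = v := by
        rw [hu, smul_smul, mul_inv_cancel₀ htpos.ne', one_smul]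
      have hkey := key u hun ‖v‖ htpos
      rw [hvu] at hkey
      have hF0 : F v₀ ≤ F 0 := hv₀ (Metric.mem_closedBall_self (by linarith))
      have hRε : (F 0 - ξ) / ε + 1 ≤ R := le_max_left _ _
      have hmul : R * ε ≤ ‖v‖ * ε := mul_le_mul_of_nonneg_right hvR.le hεpos.le
      have hdiv : ((F 0 - ξ) / ε + 1) * ε = F 0 - ξ + ε := by
        field_simp
      have hchain : F 0 < ‖v‖ * ε + ξ := by
        have h9 : ((F 0 - ξ) / ε + 1) * ε ≤ R * ε :=
          mul_le_mul_of_nonneg_right hRε hεpos.le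
        rw [hdiv] at h9
        linarith
      calc F v₀ ≤ F 0 := hF0
        _ ≤ -∫ x, phiV v x ∂μ + Pr (fun p : Fin (k + 1) × W d => c p + phiV v p.1) := by
            have hge : ‖v‖ * ε + ξ ≤ F v := hkey
            simp only [hF] at hge
            linarith [hchain]
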